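/- Let G be a simple graph on n vertices and let t be a natural number with t ≤ n − 1. Then the total number of occurrences of degree-t vertices across all n cards of G satisfies Σ_{v ∈ V(G)} d_t(G − v) = (n − 1 − t)·d_t(G) + (t + 1)·d_{t+1}(G). -/

import Mathlib

open SimpleGraph Finset

/-- The degree of a vertex, as the cardinality of its neighbour set. -/
noncomputable def gdeg {V : Type} (G : SimpleGraph V) (v : V) : ℕ :=
  (G.neighborSet v).ncard

/-- The card `G - v`: the induced subgraph on the complement of `v`. -/
def gcard {V : Type} (G : SimpleGraph V) (v : V) : SimpleGraph {w : V // w ≠ v} :=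
  G.induce {w : V | w ≠ v}

/-- The number of vertices of degree exactly `t`. -/
noncomputable def dcount {V : Type} (G : SimpleGraph V) (t : ℕ) : ℕ :=
  {v : V | gdeg G v = t}.ncard

lemma dcount_eq_card {V : Type} [Fintype V] (G : SimpleGraph V) (t : ℕ) :
    dcount G t = (Finset.univ.filter fun v => gdeg G v = t).card := by
  classical
  rw [dcount, ← Set.ncard_coe_finset]
  congr 1
  ext v
  simp

lemma gdeg_gcard {n : ℕ} (G : SimpleGraph (Fin n)) (v : Fin n) (w : {x : Fin n // x ≠ v}) :
    gdeg (gcard G v) w = (G.neighborSet w.val \ {v}).ncard := by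
  rw [gdeg, ← Set.ncard_image_of_injective _ Subtype.val_injective]
  congr 1
  ext u
  simp only [Set.mem_image, mem_neighborSet, gcard, comap_adj, Function.Embedding.coe_subtype,
    Set.mem_diff, Set.mem_singleton_iff]
  constructor
  · rintro ⟨x, hx, rfl⟩
    exact ⟨hx, x.2⟩
  · rintro ⟨h1, h2⟩
    exact ⟨⟨u, h2⟩, h1, rfl⟩

/-- Counting occurrences of degree-`t` vertices over the whole deck:
`Σ_v d_t(G - v) = (n - 1 - t) d_t(G) + (t + 1) d_{t+1}(G)`. -/
theorem degree_count_over_deck {n t : ℕ} (ht : t ≤ n - 1) (G : SimpleGraph (Fin n)) :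
    ∑ v : Fin n, dcount (gcard G v) t
      = (n - 1 - t) * dcount G t + (t + 1) * dcount G (t + 1) := by
  classical
  have hfin : ∀ w : Fin n, (G.neighborSet w).Finite := fun w => Set.toFinite _
  -- rewrite each card count as a sum over all of Fin n
  have h1 : ∀ v : Fin n, dcount (gcard G v) t
      = ∑ w : Fin n, if w ≠ v then (if (G.neighborSet w \ {v}).ncard = t then 1 else 0) else 0 := by
    intro v
    rw [dcount_eq_card, Finset.card_filter,
      ← Finset.sum_filter (fun w : Fin n => w ≠ v)
        (fun w => if (G.neighborSet w \ {v}).ncard = t then (1:ℕ) else 0),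
      Finset.sum_subtype (p := fun w : Fin n => w ≠ v)
        (Finset.univ.filter (fun w : Fin n => w ≠ v)) (fun x => by simp)
        (fun w => if (G.neighborSet w \ {v}).ncard = t then (1:ℕ) else 0)]
    refine Finset.sum_congr rfl fun x _ => ?_
    rw [gdeg_gcard]
  simp only [h1]
  rw [Finset.sum_comm]
  -- the inner sum for a fixed vertex w
  have hkey : ∀ w : Fin n,
      (∑ v : Fin n, if w ≠ v then (if (G.neighborSet w \ {v}).ncard = t then 1 else 0) else 0)
      = (if gdeg G w = t then n - 1 - t else 0) + (if gdeg G w = t + 1 then t + 1 else 0) := by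
    intro w
    have hdiff : ∀ v : Fin n, (G.neighborSet w \ {v}).ncard
        = if G.Adj w v then gdeg G w - 1 else gdeg G w := by
      intro v
      by_cases hav : G.Adj w v
      · rw [if_pos hav, gdeg,
          Set.ncard_diff_singleton_of_mem ((G.mem_neighborSet w v).mpr hav)]
      · rw [if_neg hav, gdeg]
        congr 1
        exact Set.diff_singleton_eq_self (fun h => hav ((G.mem_neighborSet w v).mp h))
    have hpos : ∀ v : Fin n, G.Adj w v → 1 ≤ gdeg G w := by
      intro v hadj
      rw [gdeg]
      exact (Set.ncard_pos (hfin w)).mpr ⟨v, (G.mem_neighborSet w v).mpr hadj⟩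
    have hcardN : ((hfin w).toFinset).card = gdeg G w := by
      rw [gdeg, Set.ncard_eq_toFinset_card _ (hfin w)]
    simp only [← Finset.sum_filter, Finset.filter_filter]
    rw [Finset.sum_const, smul_eq_mul, mul_one]
    by_cases h0 : gdeg G w = t
    · rw [if_pos h0]
      have hne : gdeg G w ≠ t + 1 := by omega
      rw [if_neg hne, add_zero]
      have hset : Finset.univ.filter (fun v => w ≠ v ∧ (G.neighborSet w \ {v}).ncard = t)
          = (insert w ((hfin w).toFinset))ᶜ := by
        ext v
        simp only [Finset.mem_filter, Finset.mem_univ, true_and, Finset.mem_compl,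
          Finset.mem_insert, Set.Finite.mem_toFinset, mem_neighborSet, not_or]
        constructor
        · rintro ⟨hvw, hc⟩
          refine ⟨fun h => hvw h.symm, fun hadj => ?_⟩
          rw [hdiff, if_pos hadj] at hc
          have := hpos v hadj
          omega
        · rintro ⟨hvw, hadj⟩
          refine ⟨fun h => hvw h.symm, ?_⟩
          rw [hdiff, if_neg hadj, h0]
      rw [hset, Finset.card_compl,
        Finset.card_insert_of_notMem (by simp [Set.Finite.mem_toFinset]),
        Fintype.card_fin, hcardN, h0]
      omega
    · rw [if_neg h0, zero_add]
      by_cases h1 : gdeg G w = t + 1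
      · rw [if_pos h1]
        have hset : Finset.univ.filter (fun v => w ≠ v ∧ (G.neighborSet w \ {v}).ncard = t)
            = (hfin w).toFinset := by
          ext v
          simp only [Finset.mem_filter, Finset.mem_univ, true_and, Set.Finite.mem_toFinset,
            mem_neighborSet]
          constructor
          · rintro ⟨hvw, hc⟩
            by_contra hadj
            rw [hdiff, if_neg hadj, h1] at hc
            omega
          · intro hadj
            refine ⟨fun h => G.irrefl (h ▸ hadj), ?_⟩
            rw [hdiff, if_pos hadj, h1]
            omega
        rw [hset, hcardN, h1]
      · rw [if_neg h1]
        have hset : Finset.univ.filter (fun v => w ≠ v ∧ (G.neighborSet w \ {v}).ncard = t)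
            = ∅ := by
          ext v
          simp only [Finset.mem_filter, Finset.mem_univ, true_and, Finset.notMem_empty,
            iff_false, not_and]
          intro hvw hc
          by_cases hadj : G.Adj w v
          · rw [hdiff, if_pos hadj] at hc
            have := hpos v hadj
            omega
          · rw [hdiff, if_neg hadj] at hc
            exact h0 hc
        rw [hset, Finset.card_empty]
  simp only [hkey]
  rw [Finset.sum_add_distrib]
  congr 1
  · rw [← Finset.sum_filter, Finset.sum_const, smul_eq_mul, ← dcount_eq_card, mul_comm]
  · rw [← Finset.sum_filter, Finset.sum_const, smul_eq_mul, ← dcount_eq_card, mul_comm]
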